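/- Let Λ = Z_p[[T]] and let M be a finitely generated torsion Λ-module. Then Ext^1_Λ(M, Λ) has no nonzero finite submodules, i.e., the maximal finite Λ-submodule of Ext^1_Λ(M, Λ) is zero. -/

import Mathlib

open CategoryTheory

/-- `Ext^n_Λ(M, Λ)` for `Λ = ℤ_p[[T]]`, as a `Λ`-module. -/
noncomputable def extIw (p : ℕ) [Fact p.Prime] (n : ℕ)
    (M : ModuleCat.{0} (PowerSeries ℤ_[p])) : ModuleCat (PowerSeries ℤ_[p]) :=
  ((Ext (PowerSeries ℤ_[p]) (ModuleCat.{0} (PowerSeries ℤ_[p])) n).obj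
    (Opposite.op M)).obj (ModuleCat.of _ (PowerSeries ℤ_[p]))

open PowerSeries

section Aux

variable {p : ℕ} [Fact p.Prime]

local notation "Λ" => PowerSeries ℤ_[p]


lemma pcast : ((p : Λ)) = C (p : ℤ_[p]) := by
  simp [map_natCast]

lemma p_ne_zeroΛ : (p : Λ) ≠ 0 := by
  intro h
  have := congrArg (constantCoeff (R := ℤ_[p])) h
  rw [map_natCast, map_zero] at this
  exact Nat.Prime.ne_zero Fact.out (by exact_mod_cast this)

lemma pk_dvd_iff (k : ℕ) (f : Λ) :
    (p : Λ) ^ k ∣ f ↔ ∀ n, (p : ℤ_[p]) ^ k ∣ (coeff n) f := by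
  constructor
  · rintro ⟨g, rfl⟩ n
    rw [pcast, ← map_pow, coeff_C_mul]
    exact Dvd.intro _ rfl
  · intro h
    refine ⟨PowerSeries.mk (fun n => (h n).choose), ?_⟩
    ext n
    rw [pcast, ← map_pow, coeff_C_mul, coeff_mk]
    exact (h n).choose_spec

lemma pk_dvd_of_dvd_X_pow_mul (k m : ℕ) (f : Λ) (h : (p : Λ) ^ k ∣ X ^ m * f) :
    (p : Λ) ^ k ∣ f := by
  rw [pk_dvd_iff] at h ⊢
  intro n
  simpa using h (n + m)

lemma isUnit_one_sub_p_pow (m : ℕ) (hm : m ≠ 0) : IsUnit (1 - (p : Λ) ^ m) := by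
  rcases IsLocalRing.isUnit_or_isUnit_one_sub_self ((p : Λ) ^ m) with h | h
  · exfalso
    have hp : IsUnit (p : Λ) := (isUnit_pow_iff hm).mp h
    rw [pcast, PowerSeries.isUnit_iff_constantCoeff, constantCoeff_C] at hp
    exact (mem_nonunits_iff.mp PadicInt.p_nonunit) hp
  · exact h

lemma isUnit_one_sub_X_pow (m : ℕ) (hm : m ≠ 0) : IsUnit (1 - (X : Λ) ^ m) := by
  rw [PowerSeries.isUnit_iff_constantCoeff, map_sub, map_one, map_pow, constantCoeff_X,
    zero_pow hm, sub_zero]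
  exact isUnit_one

/-- In a finite submodule, every element is killed by a power of `r`,
provided `1 - r^m` is always a unit. -/
lemma exists_pow_smul_eq_zero {E : Type} [AddCommGroup E] [Module Λ E]
    (N : Submodule Λ E) (hN : Finite N) (r : Λ)
    (hu : ∀ m : ℕ, m ≠ 0 → IsUnit (1 - r ^ m)) (x : E) (hx : x ∈ N) :
    ∃ k, r ^ k • x = 0 := by
  have hmem : ∀ n : ℕ, r ^ n • x ∈ N := fun n => N.smul_mem _ hx
  obtain ⟨i, j, hij, hfe⟩ := Finite.exists_ne_map_eq_of_infinite
    (fun n : ℕ => (⟨r ^ n • x, hmem n⟩ : N))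
  wlog hlt : i < j generalizing i j
  · exact this j i hij.symm hfe.symm (by omega)
  have heq : r ^ i • x = r ^ j • x := congrArg Subtype.val hfe
  obtain ⟨u, hu'⟩ := hu (j - i) (by omega)
  refine ⟨i, ?_⟩
  have h0 : ((1 - r ^ (j - i)) * r ^ i) • x = 0 := by
    rw [sub_mul, one_mul, sub_smul, ← pow_add]
    rw [show j - i + i = j by omega]
    rw [heq, sub_self]
  rw [← hu', mul_smul] at h0
  have h1 := congrArg (fun y => (↑u⁻¹ : Λ) • y) h0
  simp only [smul_smul, ← mul_assoc, Units.inv_mul, one_mul, smul_zero] at h1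
  exact h1


/-- The key extension lemma: a cocycle `φ` on `A` (mapping to `B`) whose `p^k₁`- and
`X^k₂`-multiples extend to `B` along `d`, itself extends, provided `d` has
torsion cokernel. -/
lemma extend_of_torsion {A B : Type} [AddCommGroup A] [AddCommGroup B]
    [Module Λ A] [Module Λ B] (k₁ k₂ : ℕ)
    (d : A →ₗ[Λ] B) (φ : A →ₗ[Λ] Λ) (ψ₁ ψ₂ : B →ₗ[Λ] Λ)
    (h1 : ∀ a, ψ₁ (d a) = (p : Λ) ^ k₁ * φ a)
    (h2 : ∀ a, ψ₂ (d a) = (X : Λ) ^ k₂ * φ a)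
    (htor : ∀ b : B, ∃ g : Λ, g ≠ 0 ∧ ∃ a, d a = g • b) :
    ∃ χ : B →ₗ[Λ] Λ, ∀ a, χ (d a) = φ a := by
  have hpk : ((p : Λ) ^ k₁) ≠ 0 := pow_ne_zero _ p_ne_zeroΛ
  -- Step 1: X^k₂ * ψ₁ b = p^k₁ * ψ₂ b for all b
  have step1 : ∀ b : B, (X : Λ) ^ k₂ * ψ₁ b = (p : Λ) ^ k₁ * ψ₂ b := by
    intro b
    obtain ⟨g, hg, a, ha⟩ := htor b
    apply mul_left_cancel₀ hg
    calc g * ((X : Λ) ^ k₂ * ψ₁ b) = (X : Λ) ^ k₂ * ψ₁ (g • b) := by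
          rw [map_smul, smul_eq_mul]; ring
      _ = (X : Λ) ^ k₂ * ((p : Λ) ^ k₁ * φ a) := by rw [← ha, h1]
      _ = (p : Λ) ^ k₁ * ((X : Λ) ^ k₂ * φ a) := by ring
      _ = (p : Λ) ^ k₁ * ψ₂ (d a) := by rw [h2]
      _ = g * ((p : Λ) ^ k₁ * ψ₂ b) := by
          rw [ha, map_smul, smul_eq_mul]; ring
  -- Step 2: p^k₁ divides every value of ψ₁
  have step2 : ∀ b : B, ∃ c : Λ, ψ₁ b = (p : Λ) ^ k₁ * c := by
    intro b
    have : (p : Λ) ^ k₁ ∣ (X : Λ) ^ k₂ * ψ₁ b := ⟨ψ₂ b, step1 b⟩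
    obtain ⟨c, hc⟩ := pk_dvd_of_dvd_X_pow_mul k₁ k₂ _ this
    exact ⟨c, hc⟩
  choose c hc using step2
  have hcu : ∀ b (y : Λ), ψ₁ b = (p : Λ) ^ k₁ * y → c b = y := by
    intro b y hy
    apply mul_left_cancel₀ hpk
    rw [← hc b, hy]
  refine ⟨{ toFun := c, map_add' := ?_, map_smul' := ?_ }, ?_⟩
  · intro b₁ b₂
    apply mul_left_cancel₀ hpk
    rw [← hc (b₁ + b₂), map_add, hc b₁, hc b₂]; ring
  · intro r b
    apply mul_left_cancel₀ hpk
    simp only [RingHom.id_apply, smul_eq_mul]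
    rw [← hc (r • b), map_smul, smul_eq_mul, hc b]; ring
  · intro a
    apply mul_left_cancel₀ hpk
    have : ψ₁ (d a) = (p : Λ) ^ k₁ * c (d a) := hc (d a)
    simp only [LinearMap.coe_mk, AddHom.coe_mk]
    rw [← this, h1 a]


lemma key (M : Type) [AddCommGroup M] [Module Λ M]
    (hM : Module.IsTorsion Λ M)
    (y : extIw p 1 (ModuleCat.of Λ M)) (k₁ k₂ : ℕ)
    (h1 : (p : Λ) ^ k₁ • y = 0) (h2 : (X : Λ) ^ k₂ • y = 0) : y = 0 := by
  classical
  let X0 : ModuleCat.{0} Λ := ModuleCat.of Λ M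
  let P : ProjectiveResolution X0 := (HasProjectiveResolution.out (Z := X0)).some
  let Y : ModuleCat.{0} Λ := ModuleCat.of Λ Λ
  let Cx := P.complex.linearYonedaObj Λ Y
  have hprev : (ComplexShape.up ℕ).prev 1 = 0 := by simp
  have hnext : (ComplexShape.up ℕ).next 1 = 2 := by simp
  let S := Cx.sc' 0 1 2
  let e : extIw p 1 X0 ≅ ModuleCat.of Λ (LinearMap.ker S.g.hom ⧸ LinearMap.range S.moduleCatToCycles) :=
    P.isoExt 1 Y ≪≫ Cx.homologyIsoSc' 0 1 2 hprev hnext ≪≫ S.moduleCatHomologyIso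
  -- transfer to the concrete homology module
  suffices h : e.hom y = 0 by
    have := congrArg e.inv h
    rw [map_zero] at this
    rw [← this]
    exact (Iso.hom_inv_id_apply e y).symm
  have h1' : (p : Λ) ^ k₁ • e.hom y = 0 := by rw [← map_smul, h1, map_zero]
  have h2' : (X : Λ) ^ k₂ • e.hom y = 0 := by rw [← map_smul, h2, map_zero]
  clear h1 h2
  -- h lives in ker S.g ⧸ range toCycles
  obtain ⟨z, hz⟩ := Submodule.Quotient.mk_surjective _ (e.hom y)
  rw [← hz] at h1' h2' ⊢
  rw [← Submodule.Quotient.mk_smul, Submodule.Quotient.mk_eq_zero] at h1' h2'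
  rw [Submodule.Quotient.mk_eq_zero]
  obtain ⟨ψ₁, hψ₁⟩ := h1'
  obtain ⟨ψ₂, hψ₂⟩ := h2'
  -- decode everything elementwise
  let φ : (P.complex.X 1 : Type) →ₗ[Λ] Λ := (z.val : P.complex.X 1 ⟶ Y).hom
  let d10 : (P.complex.X 1 : Type) →ₗ[Λ] (P.complex.X 0 : Type) := (P.complex.d 1 0).hom
  let ψ₁' : (P.complex.X 0 : Type) →ₗ[Λ] Λ := (ψ₁ : P.complex.X 0 ⟶ Y).hom
  let ψ₂' : (P.complex.X 0 : Type) →ₗ[Λ] Λ := (ψ₂ : P.complex.X 0 ⟶ Y).hom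
  have h1e : ∀ a : (P.complex.X 1 : Type), ψ₁' (d10 a) = (p : Λ) ^ k₁ * φ a := by
    intro a
    have hval : ψ₁'.comp d10 = (p : Λ) ^ k₁ • φ :=
      congrArg (fun f => ModuleCat.Hom.hom (Subtype.val f : P.complex.X 1 ⟶ Y)) hψ₁
    exact LinearMap.congr_fun hval a
  have h2e : ∀ a : (P.complex.X 1 : Type), ψ₂' (d10 a) = (X : Λ) ^ k₂ * φ a := by
    intro a
    have hval : ψ₂'.comp d10 = (X : Λ) ^ k₂ • φ :=
      congrArg (fun f => ModuleCat.Hom.hom (Subtype.val f : P.complex.X 1 ⟶ Y)) hψ₂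
    exact LinearMap.congr_fun hval a
  -- torsion cokernel of d 1 0
  have hexact := P.exact₀
  rw [ShortComplex.moduleCat_exact_iff] at hexact
  have htor : ∀ b : (P.complex.X 0 : Type), ∃ g : Λ, g ≠ 0 ∧
      ∃ a, d10 a = g • b := by
    intro b
    obtain ⟨g, hg⟩ := @hM (show M from P.π.f 0 b)
    refine ⟨(g : Λ), nonZeroDivisors.ne_zero g.2, ?_⟩
    have hzero : P.π.f 0 ((g : Λ) • b) = 0 := by
      rw [map_smul]
      exact hg
    obtain ⟨a, ha⟩ := hexact _ hzero
    exact ⟨a, by convert ha using 1⟩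
  obtain ⟨χ, hχ⟩ := extend_of_torsion k₁ k₂ d10 φ ψ₁' ψ₂' h1e h2e htor
  refine ⟨ModuleCat.ofHom χ, ?_⟩
  apply Subtype.ext
  exact ModuleCat.hom_ext (LinearMap.ext hχ)


end Aux

/-- For `Λ = ℤ_p[[T]]` and `M` a finitely generated torsion `Λ`-module,
`Ext¹_Λ(M, Λ)` has no nonzero finite submodules: every finite submodule is zero. -/
theorem stmt4 (p : ℕ) [Fact p.Prime]
    (M : Type) [AddCommGroup M] [Module (PowerSeries ℤ_[p]) M]
    [Module.Finite (PowerSeries ℤ_[p]) M]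
    (hM : Module.IsTorsion (PowerSeries ℤ_[p]) M)
    (N : Submodule (PowerSeries ℤ_[p]) (extIw p 1 (ModuleCat.of _ M)))
    (hN : Finite N) :
    N = ⊥ := by
  rw [Submodule.eq_bot_iff]
  intro y hy
  obtain ⟨k₁, hk₁⟩ := exists_pow_smul_eq_zero N hN _ isUnit_one_sub_p_pow y hy
  obtain ⟨k₂, hk₂⟩ := exists_pow_smul_eq_zero N hN _ isUnit_one_sub_X_pow y hy
  exact key M hM y k₁ k₂ hk₁ hk₂
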